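/- arXiv:2603.13863 — 2 statements merged into one kernel-verified Lean document; each statement's English description precedes it below -/
import Mathlib

section
/- If ρ is a linear combination ρ = ∑_α λ_α ψ_α of KD-classical pure projections ψ_α with real coefficients whose KD distributions satisfy the disjoint-support property of Lemma 1, then for any pair of indices (i*, j*) with i* ≡ m_α (mod y_α) and j* ≡ s_α (mod x_α) simultaneously for one state ψ_α from each factorization level, the KD value ⟨a_{i*}|ρ|b_{j*}⟩⟨b_{j*}|a_{i*}⟩ equals (1/d) times the sum of the coefficients λ_α of those states; hence nonnegativity of the KD distribution of ρ implies nonnegativity of that coefficient sum. -/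
open Finset Complex
open scoped ComplexOrder

/-- ω_n = e^{2πi/n} -/
noncomputable def ww (n : ℕ) : ℂ := Complex.exp (2 * Real.pi * Complex.I / n)

/-- |ψ_{m,s}⟩ = (1/√x) ∑_{k<x} ω_x^{sk} |a_{ky+m}⟩ in ℂ^d (standard basis coords). -/
lemma ww_pow_self {n : ℕ} (hn : (n:ℕ) ≠ 0) : ww n ^ n = 1 := by
  rw [ww, ← Complex.exp_nat_mul]
  have h : (n:ℂ) * (2 * Real.pi * Complex.I / n) = 2 * Real.pi * Complex.I := by
    have : (n:ℂ) ≠ 0 := Nat.cast_ne_zero.mpr hn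
    field_simp
  rw [h, Complex.exp_two_pi_mul_I]

lemma conj_ww_mul (n : ℕ) : (starRingEnd ℂ) (ww n) * ww n = 1 := by
  rw [ww, ← Complex.exp_conj, ← Complex.exp_add]
  have h : (starRingEnd ℂ) (2 * Real.pi * Complex.I / (n:ℂ)) + 2 * Real.pi * Complex.I / n = 0 := by
    simp [map_div₀, map_mul, Complex.conj_I, map_ofNat]
    ring
  rw [h, Complex.exp_zero]

lemma ww_conj_pow (n a : ℕ) : ww n ^ a * (starRingEnd ℂ) (ww n) ^ a = 1 := by
  rw [← mul_pow, mul_comm, conj_ww_mul, one_pow]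

lemma ww_mul_pow {x y : ℕ} (hx : x ≠ 0) (hy : y ≠ 0) : ww (x*y) ^ y = ww x := by
  rw [ww, ww, ← Complex.exp_nat_mul]
  congr 1
  have hx' : (x:ℂ) ≠ 0 := Nat.cast_ne_zero.mpr hx
  have hy' : (y:ℂ) ≠ 0 := Nat.cast_ne_zero.mpr hy
  push_cast
  field_simp

noncomputable def psi (d x y m s : ℕ) : Fin d → ℂ :=
  fun t => (1 / Real.sqrt x) *
    ∑ k ∈ Finset.range x, ww x ^ (s * k) * (if (t : ℕ) = k * y + m then 1 else 0)

/-- Fourier basis vector |b_j⟩, coordinates in the standard basis. -/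
noncomputable def bvec (d j : ℕ) : Fin d → ℂ :=
  fun i => ww d ^ ((i : ℕ) * j) / Real.sqrt d

/-- rank one projection |v⟩⟨v| as a matrix. -/
noncomputable def proj {d : ℕ} (v : Fin d → ℂ) : Matrix (Fin d) (Fin d) ℂ :=
  fun i j => v i * (starRingEnd ℂ) (v j)

/-- KD quasiprobability Q_{ij}(ρ) = ⟨a_i|ρ|b_j⟩⟨b_j|a_i⟩ (standard/Fourier bases). -/
noncomputable def KD {d : ℕ} (ρ : Matrix (Fin d) (Fin d) ℂ) (i j : Fin d) : ℂ :=
  (∑ l, ρ i l * bvec d (j : ℕ) l) * (starRingEnd ℂ) (bvec d (j : ℕ) i)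

/-- value of psi at coordinate i with i % y = m -/
lemma psi_apply {d x y : ℕ} (hy : 0 < y) (hd : x * y = d) (s : ℕ) (i : Fin d) :
    psi d x y ((i:ℕ) % y) s i = (1 / Real.sqrt x) * ww x ^ (s * ((i:ℕ)/y)) := by
  unfold psi
  congr 1
  rw [Finset.sum_eq_single ((i:ℕ)/y)]
  · rw [if_pos, mul_one]
    exact (Nat.div_add_mod' _ _).symm
  · intro k _ hne
    rw [if_neg, mul_zero]
    intro h
    apply hne
    have h2 : k * y + (i:ℕ) % y = (i:ℕ)/y * y + (i:ℕ) % y := by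
      rw [Nat.div_add_mod']; exact h.symm
    exact Nat.eq_of_mul_eq_mul_right hy (Nat.add_right_cancel h2)
  · intro h
    have hlt : (i:ℕ) < y * x := by rw [mul_comm, hd]; exact i.isLt
    exact absurd (Finset.mem_range.mpr (Nat.div_lt_of_lt_mul hlt)) h

/-- indicator sum over Fin d -/
lemma sum_ind {d a : ℕ} (ha : a < d) (f : ℕ → ℂ) :
    ∑ l : Fin d, (if (l:ℕ) = a then (1:ℂ) else 0) * f (l:ℕ) = f a := by
  rw [Fin.sum_univ_eq_sum_range (fun l => (if l = a then (1:ℂ) else 0) * f l)]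
  rw [Finset.sum_eq_single a]
  · rw [if_pos rfl, one_mul]
  · intro k _ hne; rw [if_neg hne, zero_mul]
  · intro h; exact absurd (Finset.mem_range.mpr ha) h

lemma KD_proj_eq {d x y : ℕ} (hx : 0 < x) (hy : 0 < y) (hd : x * y = d)
    (i j : Fin d) :
    KD (proj (psi d x y ((i:ℕ) % y) ((j:ℕ) % x))) i j = 1 / d := by
  have hd0 : 0 < d := hd ▸ Nat.mul_pos hx hy
  set m := (i:ℕ) % y with hm
  set s := (j:ℕ) % x with hs
  set u := ww x with hu
  set w := ww d with hw
  set cu := (starRingEnd ℂ) (ww x) with hcu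
  set cw := (starRingEnd ℂ) (ww d) with hcw
  have hwy : w ^ y = u := by
    show ww d ^ y = ww x
    rw [← hd]; exact ww_mul_pow hx.ne' hy.ne'
  have hcwy : cw ^ y = cu := by rw [hcw, hcu, ← map_pow, hwy]
  have hcux : cu ^ x = 1 := by rw [hcu, ← map_pow, ww_pow_self hx.ne', map_one]
  -- step B: inner sum
  have hux : u ^ x = 1 := ww_pow_self hx.ne'
  have hS : ∑ l : Fin d, (starRingEnd ℂ) (psi d x y m s l) * bvec d (j:ℕ) l
      = (1 / Real.sqrt x) * (1 / Real.sqrt d) * (x * w ^ (m * (j:ℕ))) := by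
    have hterm : ∀ l : Fin d, (starRingEnd ℂ) (psi d x y m s l) * bvec d (j:ℕ) l
        = ∑ k ∈ Finset.range x, (if (l:ℕ) = k*y+m then (1:ℂ) else 0) *
            ((1 / Real.sqrt x) * (1 / Real.sqrt d) *
              (cu ^ (s*k) * w ^ ((k*y+m)*(j:ℕ)))) := by
      intro l
      unfold psi bvec
      simp only [map_mul, map_sum, Finset.mul_sum, Finset.sum_mul]
      apply Finset.sum_congr rfl
      intro k _
      by_cases h : (l:ℕ) = k*y+m
      · simp only [h, if_pos rfl, if_true, eq_self_iff_true, map_one, mul_one, map_pow, map_div₀,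
          Complex.conj_ofReal, map_one, hcu, hw]
        ring
      · simp only [if_neg h, map_zero, mul_zero, zero_mul]
    calc ∑ l : Fin d, (starRingEnd ℂ) (psi d x y m s l) * bvec d (j:ℕ) l
        = ∑ l : Fin d, ∑ k ∈ Finset.range x, (if (l:ℕ) = k*y+m then (1:ℂ) else 0) *
            ((1 / Real.sqrt x) * (1 / Real.sqrt d) *
              (cu ^ (s*k) * w ^ ((k*y+m)*(j:ℕ)))) :=
          Finset.sum_congr rfl (fun l _ => hterm l)
      _ = ∑ k ∈ Finset.range x, ∑ l : Fin d, (if (l:ℕ) = k*y+m then (1:ℂ) else 0) *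
            ((1 / Real.sqrt x) * (1 / Real.sqrt d) *
              (cu ^ (s*k) * w ^ ((k*y+m)*(j:ℕ)))) := Finset.sum_comm
      _ = ∑ k ∈ Finset.range x, (1 / Real.sqrt x) * (1 / Real.sqrt d) *
              (cu ^ (s*k) * w ^ ((k*y+m)*(j:ℕ))) := by
          apply Finset.sum_congr rfl
          intro k hk
          have hlt : k*y+m < d := by
            have hk' : k + 1 ≤ x := Finset.mem_range.mp hk
            have hm' : m < y := Nat.mod_lt _ hy
            calc k*y+m < k*y+y := by omega
              _ = (k+1)*y := by ring
              _ ≤ x*y := Nat.mul_le_mul_right y hk'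
              _ = d := hd
          exact sum_ind hlt (fun _ => (1 / Real.sqrt x) * (1 / Real.sqrt d) *
              (cu ^ (s*k) * w ^ ((k*y+m)*(j:ℕ))))
      _ = ∑ k ∈ Finset.range x, (1 / Real.sqrt x) * (1 / Real.sqrt d) * w ^ (m * (j:ℕ)) := by
          apply Finset.sum_congr rfl
          intro k _
          congr 1
          have e1 : (k*y+m)*(j:ℕ) = y*(k*(j:ℕ)) + m*(j:ℕ) := by ring
          rw [e1, pow_add, show w ^ (y*(k*(j:ℕ))) = (w^y)^(k*(j:ℕ)) from pow_mul _ _ _, hwy]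
          have e2 : k*(j:ℕ) = x*(k*((j:ℕ)/x)) + s*k := by
            conv_lhs => rw [show (j:ℕ) = (j:ℕ)/x*x+s from (Nat.div_add_mod' _ _).symm]
            ring
          rw [show u^(k*(j:ℕ)) = u^(x*(k*((j:ℕ)/x)) + s*k) from by rw [← e2],
            pow_add, show u ^ (x*(k*((j:ℕ)/x))) = (u^x)^(k*((j:ℕ)/x)) from pow_mul _ _ _,
            hux, one_pow, one_mul]
          calc cu ^ (s*k) * (u ^ (s*k) * w ^ (m*(j:ℕ)))
              = (u ^ (s*k) * cu ^ (s*k)) * w ^ (m*(j:ℕ)) := by ring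
            _ = w ^ (m*(j:ℕ)) := by rw [hu, hcu, ww_conj_pow, one_mul]
      _ = (1 / Real.sqrt x) * (1 / Real.sqrt d) * (x * w ^ (m * (j:ℕ))) := by
          rw [Finset.sum_const, Finset.card_range, nsmul_eq_mul]
          ring
  -- phase
  have hphase : u ^ (s * ((i:ℕ)/y)) * (w ^ (m*(j:ℕ)) * cw ^ ((i:ℕ)*(j:ℕ))) = 1 := by
    have hi' : (i:ℕ) = (i:ℕ)/y*y + m := (Nat.div_add_mod' _ _).symm
    have e1 : (i:ℕ)*(j:ℕ) = y*(((i:ℕ)/y)*(j:ℕ)) + m*(j:ℕ) := by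
      conv_lhs => rw [hi']
      ring
    rw [e1, pow_add, show cw ^ (y*(((i:ℕ)/y)*(j:ℕ))) = (cw^y)^(((i:ℕ)/y)*(j:ℕ)) from pow_mul _ _ _, hcwy]
    have e2 : ((i:ℕ)/y)*(j:ℕ) = x*(((i:ℕ)/y)*((j:ℕ)/x)) + s*((i:ℕ)/y) := by
      conv_lhs => rw [show (j:ℕ) = (j:ℕ)/x*x+s from (Nat.div_add_mod' _ _).symm]
      ring
    rw [show cu^(((i:ℕ)/y)*(j:ℕ)) = cu^(x*(((i:ℕ)/y)*((j:ℕ)/x)) + s*((i:ℕ)/y)) from by rw [← e2],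
      pow_add, show cu ^ (x*(((i:ℕ)/y)*((j:ℕ)/x))) = (cu^x)^(((i:ℕ)/y)*((j:ℕ)/x)) from pow_mul _ _ _,
      hcux, one_pow, one_mul]
    calc u ^ (s*((i:ℕ)/y)) * (w ^ (m*(j:ℕ)) * (cu ^ (s*((i:ℕ)/y)) * cw ^ (m*(j:ℕ))))
        = (u ^ (s*((i:ℕ)/y)) * cu ^ (s*((i:ℕ)/y))) * (w ^ (m*(j:ℕ)) * cw ^ (m*(j:ℕ))) := by
          ring
      _ = 1 := by rw [hu, hcu, hw, hcw, ww_conj_pow, ww_conj_pow, one_mul]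
  -- assemble
  unfold KD proj
  rw [show (∑ l, (psi d x y m s i * (starRingEnd ℂ) (psi d x y m s l)) * bvec d (j:ℕ) l)
      = psi d x y m s i * ∑ l, (starRingEnd ℂ) (psi d x y m s l) * bvec d (j:ℕ) l from by
    rw [Finset.mul_sum]
    exact Finset.sum_congr rfl fun l _ => by ring]
  rw [hS, psi_apply hy hd]
  have hb : (starRingEnd ℂ) (bvec d (j:ℕ) i) = cw ^ ((i:ℕ)*(j:ℕ)) / Real.sqrt d := by
    unfold bvec
    rw [map_div₀, map_pow]
    simp [Complex.conj_ofReal, hcw]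
  rw [hb, ← hu]
  have hsx : ((Real.sqrt x : ℝ):ℂ) * ((Real.sqrt x : ℝ):ℂ) = (x:ℂ) := by
    norm_cast
    exact Real.mul_self_sqrt (by positivity)
  have hsd : ((Real.sqrt d : ℝ):ℂ) * ((Real.sqrt d : ℝ):ℂ) = (d:ℂ) := by
    norm_cast
    exact Real.mul_self_sqrt (by positivity)
  have hx' : (x:ℂ) ≠ 0 := Nat.cast_ne_zero.mpr hx.ne'
  have hd' : (d:ℂ) ≠ 0 := Nat.cast_ne_zero.mpr hd0.ne'
  calc 1 / (Real.sqrt x:ℂ) * u ^ (s * ((i:ℕ) / y)) * (1 / (Real.sqrt x:ℂ) * (1 / (Real.sqrt d:ℂ)) * (x * w ^ (m * (j:ℕ)))) * (cw ^ ((i:ℕ)*(j:ℕ)) / (Real.sqrt d:ℂ))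
      = ((x:ℂ)/(((Real.sqrt x:ℝ):ℂ)*((Real.sqrt x:ℝ):ℂ))) * (1/(((Real.sqrt d:ℝ):ℂ)*((Real.sqrt d:ℝ):ℂ))) * (u ^ (s * ((i:ℕ)/y)) * (w ^ (m*(j:ℕ)) * cw ^ ((i:ℕ)*(j:ℕ)))) := by
        ring
    _ = 1 / d := by
        rw [hsx, hsd, hphase, mul_one, div_self hx', one_mul]

lemma KD_sum {d : ℕ} {ι : Type*} (F : Finset ι) (c : ι → ℂ)
    (M : ι → Matrix (Fin d) (Fin d) ℂ) (i j : Fin d) :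
    KD (∑ t ∈ F, c t • M t) i j = ∑ t ∈ F, c t * KD (M t) i j := by
  unfold KD
  simp only [Matrix.sum_apply, Matrix.smul_apply, smul_eq_mul, Finset.sum_mul]
  rw [Finset.sum_comm]
  apply Finset.sum_congr rfl
  intro t _
  rw [Finset.mul_sum]
  exact Finset.sum_congr rfl fun l _ => by ring
/-- The set of KD-classical pure-state projections for the DFT pair in dimension d. -/
def pureKD (d : ℕ) : Set (Matrix (Fin d) (Fin d) ℂ) :=
  {M | ∃ x y m s : ℕ, x * y = d ∧ m < y ∧ s < x ∧ M = proj (psi d x y m s)}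

/-- if ρ = ∑_t λ_t ψ^t (one KD-classical pure projection from each
    factorization level t of d = p^r) and i*, j* satisfy the support congruences of
    Lemma 1 simultaneously for all levels, then KD(ρ)(i*,j*) = (1/d)∑_t λ_t; hence
    nonnegativity of the KD distribution of ρ forces 0 ≤ ∑_t λ_t. -/
theorem kd_coefficient_sum (p r : ℕ) (hp : p.Prime) (m s : ℕ → ℕ) (lam : ℕ → ℝ)
    (hms : ∀ t ≤ r, m t < p ^ (r - t) ∧ s t < p ^ t)
    (ρ : Matrix (Fin (p ^ r)) (Fin (p ^ r)) ℂ)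
    (hρ : ρ = ∑ t ∈ Finset.range (r + 1),
        (lam t : ℂ) • proj (psi (p ^ r) (p ^ t) (p ^ (r - t)) (m t) (s t)))
    (istar jstar : Fin (p ^ r))
    (hi : ∀ t ≤ r, (istar : ℕ) % p ^ (r - t) = m t)
    (hj : ∀ t ≤ r, (jstar : ℕ) % p ^ t = s t) :
    KD ρ istar jstar = ((1 : ℂ) / (p ^ r)) * ∑ t ∈ Finset.range (r + 1), (lam t : ℂ) ∧
    ((∀ i j, 0 ≤ KD ρ i j) → 0 ≤ ∑ t ∈ Finset.range (r + 1), lam t) := by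
  have hp0 : 0 < p := hp.pos
  have hdpos : 0 < p ^ r := Nat.pow_pos hp0
  have hmain : KD ρ istar jstar = ((1 : ℂ) / (p ^ r)) * ∑ t ∈ Finset.range (r + 1), (lam t : ℂ) := by
    rw [hρ, KD_sum]
    rw [Finset.mul_sum]
    apply Finset.sum_congr rfl
    intro t ht
    have ht' : t ≤ r := Nat.lt_succ_iff.mp (Finset.mem_range.mp ht)
    have hxy : p ^ t * p ^ (r - t) = p ^ r := by
      rw [← pow_add]
      congr 1
      omega
    have h1 : m t = (istar:ℕ) % p ^ (r-t) := (hi t ht').symm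
    have h2 : s t = (jstar:ℕ) % p ^ t := (hj t ht').symm
    rw [h1, h2, KD_proj_eq (Nat.pow_pos hp0 : 0 < p ^ t) (Nat.pow_pos hp0 : 0 < p ^ (r-t)) hxy]
    push_cast
    ring
  refine ⟨hmain, fun hpos => ?_⟩
  have h0 := hpos istar jstar
  rw [hmain] at h0
  have hre : ((1:ℂ) / (p:ℂ)^r) * ∑ t ∈ Finset.range (r+1), (lam t : ℂ)
      = ((((1:ℝ)/(p:ℝ)^r) * ∑ t ∈ Finset.range (r+1), lam t : ℝ) : ℂ) := by
    push_cast
    ring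
  rw [hre] at h0
  have h1 : (0:ℝ) ≤ ((1:ℝ)/(p:ℝ)^r) * ∑ t ∈ Finset.range (r+1), lam t :=
    Complex.zero_le_real.mp h0
  have hc : (0:ℝ) < (1:ℝ)/(p:ℝ)^r := by positivity
  have h2 : ((1:ℝ)/(p:ℝ)^r) * 0 ≤ ((1:ℝ)/(p:ℝ)^r) * ∑ t ∈ Finset.range (r+1), lam t := by
    rwa [mul_zero]
  exact le_of_mul_le_mul_left h2 hc
end

section
/- Let d = xy = x̃ỹ with gcd conditions as in the DFT setting, x = x̃p for a prime p | d. Denote by V_x and V_{x̃} the sets of KD-classical pure projections associated with the factorizations d = xy and d = x̃ỹ. Then span_ℝ(V_x ∪ V_{x̃}) contains, for every m, s̃, the operator ∑_{j ∈ Z_p} ψ_{m, s̃ + j·c} where c = p^{r_{(1,x)}-1}M_1N_1, and this operator also lies in span_ℝ(V_{x̃}); i.e., the two vertex spaces overlap exactly along these summed projections. -/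
open Finset Complex
open scoped ComplexOrder

/-- The set of KD-classical pure projections attached to the factorization d = x'·(d/x'). -/
def vertexSet (d x' : ℕ) : Set (Matrix (Fin d) (Fin d) ℂ) :=
  {M | ∃ m s : ℕ, m < d / x' ∧ s < x' ∧ M = proj (psi d x' (d / x') m s)}

lemma ww_ne_zero (n : ℕ) : ww n ≠ 0 := Complex.exp_ne_zero _

lemma ww_prim (n : ℕ) (hn : n ≠ 0) : IsPrimitiveRoot (ww n) n :=
  Complex.isPrimitiveRoot_exp n hn

lemma ww_zpow_eq_one_iff (n : ℕ) (hn : n ≠ 0) (a : ℤ) : ww n ^ a = 1 ↔ (n : ℤ) ∣ a :=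
  (ww_prim n hn).zpow_eq_one_iff_dvd a

lemma ww_zpow_congr (n : ℕ) (hn : n ≠ 0) {a b : ℤ} (h : (n : ℤ) ∣ a - b) :
    ww n ^ a = ww n ^ b := by
  obtain ⟨t, ht⟩ := h
  have ha : a = b + (n : ℤ) * t := by linarith
  rw [ha, zpow_add₀ (ww_ne_zero n), zpow_mul,
    (ww_zpow_eq_one_iff n hn (n : ℤ)).2 dvd_rfl, one_zpow, mul_one]

lemma conj_ww (n : ℕ) : (starRingEnd ℂ) (ww n) = (ww n)⁻¹ := by
  unfold ww
  rw [← Complex.exp_conj, ← Complex.exp_neg]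
  congr 1
  simp [map_div₀, map_mul, Complex.conj_I, map_ofNat, Complex.conj_ofReal]
  ring

lemma conj_ww_zpow (n : ℕ) (a : ℤ) : (starRingEnd ℂ) (ww n ^ a) = ww n ^ (-a) := by
  rw [map_zpow₀, conj_ww, inv_zpow, ← zpow_neg]

lemma ww_pow_mul (a b : ℕ) (ha : a ≠ 0) (hb : b ≠ 0) : ww (a * b) ^ b = ww a := by
  unfold ww
  rw [← Complex.exp_nat_mul]
  congr 1
  have ha' : (a : ℂ) ≠ 0 := Nat.cast_ne_zero.2 ha
  have hb' : (b : ℂ) ≠ 0 := Nat.cast_ne_zero.2 hb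
  push_cast
  field_simp

lemma psi_eq_zero {d x y m s : ℕ} (t : Fin d) (ht : ∀ k, (t : ℕ) ≠ k * y + m) :
    psi d x y m s t = 0 := by
  unfold psi
  rw [Finset.sum_eq_zero, mul_zero]
  intro k _
  rw [if_neg (ht k), mul_zero]

lemma psi_eq_val {d x y m s : ℕ} (hy : 0 < y) (t : Fin d) (k : ℕ) (hk : k < x)
    (ht : (t : ℕ) = k * y + m) :
    psi d x y m s t = (1 / ((Real.sqrt x : ℝ) : ℂ)) * ww x ^ (s * k) := by
  unfold psi
  congr 1
  rw [Finset.sum_eq_single k]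
  · rw [if_pos ht, mul_one]
  · intro b _ hb
    rw [if_neg, mul_zero]
    intro h
    apply hb
    have : b * y = k * y := by omega
    exact Nat.eq_of_mul_eq_mul_right hy this
  · intro h
    exact absurd (Finset.mem_range.2 hk) h

lemma geom_sum_root {p : ℕ} (z : ℂ) (hz : z ^ p = 1) :
    ∑ j ∈ Finset.range p, z ^ j = if z = 1 then (p : ℂ) else 0 := by
  split_ifs with h
  · simp [h]
  · rw [geom_sum_eq h, hz, sub_self, zero_div]

lemma prod_entry (x : ℕ) (s a b : ℕ) :
    ((1 / ((Real.sqrt x : ℝ) : ℂ)) * ww x ^ (s * a)) *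
      (starRingEnd ℂ) ((1 / ((Real.sqrt x : ℝ) : ℂ)) * ww x ^ (s * b)) =
    (1 / (x : ℂ)) * ww x ^ ((s : ℤ) * ((a : ℤ) - b)) := by
  have hc : (starRingEnd ℂ) (1 / ((Real.sqrt x : ℝ) : ℂ)) = 1 / ((Real.sqrt x : ℝ) : ℂ) := by
    rw [map_div₀, map_one, Complex.conj_ofReal]
  rw [map_mul, hc]
  have h1 : (ww x ^ (s * a) : ℂ) = ww x ^ ((s * a : ℕ) : ℤ) := by rw [zpow_natCast]
  have h2 : (ww x ^ (s * b) : ℂ) = ww x ^ ((s * b : ℕ) : ℤ) := by rw [zpow_natCast]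
  rw [h1, h2, conj_ww_zpow]
  have hsq : (1 / ((Real.sqrt x : ℝ) : ℂ)) * (1 / ((Real.sqrt x : ℝ) : ℂ)) = 1 / (x : ℂ) := by
    rw [div_mul_div_comm, one_mul, ← Complex.ofReal_mul,
      Real.mul_self_sqrt (Nat.cast_nonneg x), Complex.ofReal_natCast]
  have hz : ww x ^ ((s * a : ℕ) : ℤ) * ww x ^ (-((s * b : ℕ) : ℤ))
      = ww x ^ ((s : ℤ) * ((a : ℤ) - b)) := by
    rw [← zpow_add₀ (ww_ne_zero x)]
    congr 1
    push_cast
    ring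
  calc (1 / ((Real.sqrt x : ℝ) : ℂ)) * ww x ^ ((s * a : ℕ) : ℤ) *
        ((1 / ((Real.sqrt x : ℝ) : ℂ)) * ww x ^ (-((s * b : ℕ) : ℤ)))
      = ((1 / ((Real.sqrt x : ℝ) : ℂ)) * (1 / ((Real.sqrt x : ℝ) : ℂ))) *
        (ww x ^ ((s * a : ℕ) : ℤ) * ww x ^ (-((s * b : ℕ) : ℤ))) := by ring
    _ = _ := by rw [hsq, hz]

lemma key_identity (d x y p c m st : ℕ)
    (hp : p.Prime) (hd : d = x * y) (hx : 0 < x) (hy : 0 < y)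
    (hpx : p ∣ x)
    (hxcp : x ∣ c * p)
    (hdvd : ∀ e : ℤ, (x : ℤ) ∣ (c : ℤ) * e ↔ (p : ℤ) ∣ e) :
    (∑ j ∈ Finset.range p, proj (psi d x y m ((st + j * c) % x)))
      = ∑ l ∈ Finset.range p, proj (psi d (x / p) (y * p) (l * y + m) st) := by
  have hp0 : 0 < p := hp.pos
  set xt := x / p with hxtdef
  have hxtp : xt * p = x := Nat.div_mul_cancel hpx
  have hxt0 : 0 < xt := by
    rcases Nat.eq_zero_or_pos xt with h | h
    · rw [h, zero_mul] at hxtp; omega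
    · exact h
  have hζp : ww x ^ (p : ℤ) = ww xt := by
    rw [zpow_natCast, ← hxtp]
    exact ww_pow_mul xt p hxt0.ne' hp0.ne'
  ext i j
  rw [Matrix.sum_apply, Matrix.sum_apply]
  by_cases hi : ∃ k, (i : ℕ) = k * y + m
  swap
  · push_neg at hi
    have hL : ∀ s, psi d x y m s i = 0 := fun s => psi_eq_zero i hi
    have hR : ∀ l, psi d xt (y * p) (l * y + m) st i = 0 := by
      intro l
      apply psi_eq_zero
      intro k' h
      exact hi (k' * p + l) (by rw [h]; ring)
    simp [proj, hL, hR]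
  by_cases hj : ∃ k, (j : ℕ) = k * y + m
  swap
  · push_neg at hj
    have hL : ∀ s, psi d x y m s j = 0 := fun s => psi_eq_zero j hj
    have hR : ∀ l, psi d xt (y * p) (l * y + m) st j = 0 := by
      intro l
      apply psi_eq_zero
      intro k' h
      exact hj (k' * p + l) (by rw [h]; ring)
    simp [proj, hL, hR]
  obtain ⟨ki, hki⟩ := hi
  obtain ⟨kj, hkj⟩ := hj
  have hkix : ki < x := by
    have h1 : (i : ℕ) < x * y := by rw [← hd]; exact i.isLt
    by_contra h
    push_neg at h
    have : x * y ≤ ki * y := Nat.mul_le_mul_right y h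
    omega
  have hkjx : kj < x := by
    have h1 : (j : ℕ) < x * y := by rw [← hd]; exact j.isLt
    by_contra h
    push_neg at h
    have : x * y ≤ kj * y := Nat.mul_le_mul_right y h
    omega
  set e : ℤ := (ki : ℤ) - (kj : ℤ) with he
  -- LHS term computation
  have hterm : ∀ j' ∈ Finset.range p, proj (psi d x y m ((st + j' * c) % x)) i j
      = (1 / (x : ℂ)) * ww x ^ ((st : ℤ) * e) * (ww x ^ ((c : ℤ) * e)) ^ j' := by
    intro j' _
    show psi d x y m ((st + j' * c) % x) i *
        (starRingEnd ℂ) (psi d x y m ((st + j' * c) % x) j) = _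
    rw [psi_eq_val hy i ki hkix hki, psi_eq_val hy j kj hkjx hkj, prod_entry]
    have h1 : ((st + j' * c) % x : ℕ) + x * ((st + j' * c) / x) = st + j' * c :=
      Nat.mod_add_div _ _
    have h1' : ((((st + j' * c) % x : ℕ)) : ℤ) + (x : ℤ) * (((st + j' * c) / x : ℕ) : ℤ)
        = ((st : ℤ) + (j' : ℤ) * c) := by exact_mod_cast h1
    have h2 : (x : ℤ) ∣ ((((st + j' * c) % x : ℕ)) : ℤ) * e - ((st : ℤ) + (j' : ℤ) * c) * e :=
      ⟨-((((st + j' * c) / x : ℕ)) : ℤ) * e, by linear_combination e * h1'⟩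
    rw [ww_zpow_congr x hx.ne' h2]
    have h3 : ((st : ℤ) + (j' : ℤ) * c) * e = (st : ℤ) * e + ((c : ℤ) * e) * (j' : ℤ) := by ring
    rw [h3, zpow_add₀ (ww_ne_zero x), zpow_mul (ww x) ((c : ℤ) * e) (j' : ℤ), zpow_natCast]
    ring
  rw [Finset.sum_congr rfl hterm, ← Finset.mul_sum]
  set w : ℂ := ww x ^ ((c : ℤ) * e) with hw
  have hwp : w ^ p = 1 := by
    rw [hw, ← zpow_natCast, ← zpow_mul]
    apply (ww_zpow_eq_one_iff x hx.ne' _).2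
    have hxz : (x : ℤ) ∣ ((c : ℤ) * p) := by exact_mod_cast Int.natCast_dvd_natCast.2 hxcp
    have := hxz.mul_right e
    rwa [show (c : ℤ) * (p : ℤ) * e = (c : ℤ) * e * (p : ℤ) by ring] at this
  rw [geom_sum_root w hwp]
  have hw1 : w = 1 ↔ (p : ℤ) ∣ e := by
    rw [hw, ww_zpow_eq_one_iff x hx.ne']
    exact hdvd e
  have hpe : ((p : ℤ) ∣ e) ↔ kj % p = ki % p := by
    constructor
    · intro h
      exact (Nat.modEq_iff_dvd.2 h : Nat.ModEq p kj ki)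
    · intro h
      exact Nat.modEq_iff_dvd.1 (h : Nat.ModEq p kj ki)
  -- RHS term values
  have hRi : ∀ l, l < p → psi d xt (y * p) (l * y + m) st i
      = if ki % p = l then (1 / ((Real.sqrt xt : ℝ) : ℂ)) * ww xt ^ (st * (ki / p)) else 0 := by
    intro l hl
    split_ifs with h
    · apply psi_eq_val (Nat.mul_pos hy hp0) i (ki / p)
        (Nat.div_lt_of_lt_mul (by rw [mul_comm]; omega))
      have hgen : ∀ A B : ℕ, p * A + B = ki → (i : ℕ) = A * (y * p) + (B * y + m) := by
        intro A B hAB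
        subst hAB
        rw [hki]; ring
      rw [← h]
      exact hgen (ki / p) (ki % p) (Nat.div_add_mod ki p)
    · apply psi_eq_zero
      intro k' hk'
      apply h
      have h5 : ki * y + m = (k' * p + l) * y + m := by
        rw [← hki, hk']; ring
      have h6 : ki = k' * p + l := Nat.eq_of_mul_eq_mul_right hy (by omega)
      rw [h6, mul_comm k' p, Nat.mul_add_mod, Nat.mod_eq_of_lt hl]
  have hRj : ∀ l, l < p → psi d xt (y * p) (l * y + m) st j
      = if kj % p = l then (1 / ((Real.sqrt xt : ℝ) : ℂ)) * ww xt ^ (st * (kj / p)) else 0 := by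
    intro l hl
    split_ifs with h
    · apply psi_eq_val (Nat.mul_pos hy hp0) j (kj / p)
        (Nat.div_lt_of_lt_mul (by rw [mul_comm]; omega))
      have hgen : ∀ A B : ℕ, p * A + B = kj → (j : ℕ) = A * (y * p) + (B * y + m) := by
        intro A B hAB
        subst hAB
        rw [hkj]; ring
      rw [← h]
      exact hgen (kj / p) (kj % p) (Nat.div_add_mod kj p)
    · apply psi_eq_zero
      intro k' hk'
      apply h
      have h5 : kj * y + m = (k' * p + l) * y + m := by
        rw [← hkj, hk']; ring
      have h6 : kj = k' * p + l := Nat.eq_of_mul_eq_mul_right hy (by omega)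
      rw [h6, mul_comm k' p, Nat.mul_add_mod, Nat.mod_eq_of_lt hl]
  by_cases hcase : kj % p = ki % p
  · -- both sides nonzero
    rw [if_pos (hw1.2 (hpe.2 hcase))]
    -- RHS
    have hRHS : ∑ l ∈ Finset.range p, proj (psi d xt (y * p) (l * y + m) st) i j
        = (1 / (xt : ℂ)) * ww xt ^ ((st : ℤ) * (((ki / p : ℕ) : ℤ) - ((kj / p : ℕ) : ℤ))) := by
      rw [Finset.sum_eq_single (ki % p)]
      · show psi d xt (y * p) (ki % p * y + m) st i *
            (starRingEnd ℂ) (psi d xt (y * p) (ki % p * y + m) st j) = _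
        rw [hRi _ (Nat.mod_lt _ hp0), hRj _ (Nat.mod_lt _ hp0),
          if_pos rfl, if_pos hcase, prod_entry]
      · intro l hl hne
        show psi d xt (y * p) (l * y + m) st i *
            (starRingEnd ℂ) (psi d xt (y * p) (l * y + m) st j) = 0
        rw [hRi _ (Finset.mem_range.1 hl), if_neg (fun h => hne h.symm), zero_mul]
      · intro h
        exact absurd (Finset.mem_range.2 (Nat.mod_lt _ hp0)) h
    rw [hRHS]
    -- LHS value
    have h1z : (p : ℤ) * ((ki / p : ℕ) : ℤ) + ((ki % p : ℕ) : ℤ) = (ki : ℤ) := by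
      exact_mod_cast Nat.div_add_mod ki p
    have h2z : (p : ℤ) * ((kj / p : ℕ) : ℤ) + ((kj % p : ℕ) : ℤ) = (kj : ℤ) := by
      exact_mod_cast Nat.div_add_mod kj p
    have hcz : ((kj % p : ℕ) : ℤ) = ((ki % p : ℕ) : ℤ) := by exact_mod_cast hcase
    have he2 : e = (p : ℤ) * (((ki / p : ℕ) : ℤ) - ((kj / p : ℕ) : ℤ)) := by
      rw [he]; linear_combination h2z - h1z - hcz
    have hpow : ww x ^ ((st : ℤ) * e)
        = ww xt ^ ((st : ℤ) * (((ki / p : ℕ) : ℤ) - ((kj / p : ℕ) : ℤ))) := by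
      rw [he2, show (st : ℤ) * ((p : ℤ) * (((ki / p : ℕ) : ℤ) - ((kj / p : ℕ) : ℤ)))
          = (p : ℤ) * ((st : ℤ) * (((ki / p : ℕ) : ℤ) - ((kj / p : ℕ) : ℤ))) by ring,
        zpow_mul, hζp]
    rw [hpow]
    have hxc : (x : ℂ) = (xt : ℂ) * (p : ℂ) := by rw [← hxtp]; push_cast; ring
    have hxt0' : (xt : ℂ) ≠ 0 := Nat.cast_ne_zero.2 hxt0.ne'
    have hp0' : (p : ℂ) ≠ 0 := Nat.cast_ne_zero.2 hp0.ne'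
    rw [hxc]
    field_simp
  · -- both sides zero
    rw [if_neg (fun h => hcase (hpe.1 (hw1.1 h))), mul_zero]
    symm
    apply Finset.sum_eq_zero
    intro l hl
    show psi d xt (y * p) (l * y + m) st i *
        (starRingEnd ℂ) (psi d xt (y * p) (l * y + m) st j) = 0
    by_cases h : ki % p = l
    · rw [hRj _ (Finset.mem_range.1 hl), if_neg (fun h' => hcase (h'.trans h.symm)),
        map_zero, mul_zero]
    · rw [hRi _ (Finset.mem_range.1 hl), if_neg h, zero_mul]

/-- with d = xy = x̃ỹ, x = x̃p, the operator T = ∑_{j∈Z_p} ψ_{m, s̃+j·c},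
    c = p^{r_{(1,x)}-1}M₁N₁, lies in span_ℝ(V_x ∪ V_{x̃}) and also in span_ℝ(V_{x̃}). -/
theorem summed_projection_in_spans (d x y p r1 rx M1 N1 m st : ℕ)
    (hp : p.Prime) (hd : d = x * y) (hx : 0 < x) (hy : 0 < y)
    (hr1 : d = p ^ r1 * M1) (hM1 : ¬ p ∣ M1)
    (hrx : 1 ≤ rx) (hxdvd : p ^ rx ∣ x) (hxtop : ¬ p ∣ x / p ^ rx)
    (hN1 : M1 * N1 % p ^ r1 = 1 % p ^ r1)
    (hm : m < y) (hst : st < x / p) :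
    (∑ j ∈ Finset.range p,
        proj (psi d x y m ((st + j * (p ^ (rx - 1) * M1 * N1)) % x)))
      ∈ Submodule.span ℝ (vertexSet d x ∪ vertexSet d (x / p)) ∧
    (∑ j ∈ Finset.range p,
        proj (psi d x y m ((st + j * (p ^ (rx - 1) * M1 * N1)) % x)))
      ∈ Submodule.span ℝ (vertexSet d (x / p)) := by
  have hp0 : 0 < p := hp.pos
  have hpx : p ∣ x := dvd_trans (dvd_pow_self p (by omega : rx ≠ 0)) hxdvd
  set c := p ^ (rx - 1) * M1 * N1 with hc
  set u := x / p ^ rx with hudef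
  have hu : x = p ^ rx * u := (Nat.mul_div_cancel' hxdvd).symm
  have hu0 : 0 < u := by
    rcases Nat.eq_zero_or_pos u with h | h
    · rw [h, mul_zero] at hu; omega
    · exact h
  have hpow : p ^ rx = p ^ (rx - 1) * p := by
    rw [← pow_succ]
    congr 1
    omega
  have hxd : x ∣ d := ⟨y, hd⟩
  have hr1pos : 0 < r1 := by
    by_contra h
    push_neg at h
    interval_cases r1
    rw [pow_zero, one_mul] at hr1
    exact hM1 (hr1 ▸ (hpx.trans hxd))
  have hpMN : ¬ p ∣ M1 * N1 := by
    have hdp : p ∣ p ^ r1 := dvd_pow_self p hr1pos.ne'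
    have h1 : M1 * N1 % p = 1 % p := Nat.ModEq.of_dvd hdp hN1
    intro hdvd'
    obtain ⟨k, hk⟩ := hdvd'
    have h2 : M1 * N1 % p = 0 := by rw [hk]; exact Nat.mul_mod_right p k
    have h3 : 1 % p = 1 := Nat.mod_eq_of_lt hp.one_lt
    omega
  have hux : u ∣ x := ⟨p ^ rx, by rw [hu]; ring⟩
  have huM : u ∣ M1 := by
    have hcop : Nat.Coprime u (p ^ r1) :=
      Nat.Coprime.pow_right r1 ((hp.coprime_iff_not_dvd.mpr hxtop).symm)
    exact hcop.dvd_of_dvd_mul_left (hr1 ▸ hux.trans hxd)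
  obtain ⟨w, hw⟩ := huM
  have hxcp : x ∣ c * p := by
    refine ⟨w * N1, ?_⟩
    rw [hc, hu, hw, hpow]
    ring
  have hdvd : ∀ e : ℤ, (x : ℤ) ∣ (c : ℤ) * e ↔ (p : ℤ) ∣ e := by
    intro e
    constructor
    · rintro ⟨t, ht⟩
      have hXz : (x : ℤ) = (p : ℤ) ^ (rx - 1) * p * u := by
        rw [show ((x : ℕ) : ℤ) = ((p ^ rx * u : ℕ) : ℤ) from congrArg _ hu]
        push_cast [hpow]
        ring
      have hCz : (c : ℤ) = (p : ℤ) ^ (rx - 1) * u * ((w : ℤ) * N1) := by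
        rw [show ((c : ℕ) : ℤ) = ((p ^ (rx - 1) * (u * w) * N1 : ℕ) : ℤ) from
          congrArg _ (by rw [hc, hw])]
        push_cast
        ring
      rw [hCz, hXz] at ht
      have hne : ((p : ℤ) ^ (rx - 1) * (u : ℤ)) ≠ 0 :=
        mul_ne_zero (pow_ne_zero _ (by exact_mod_cast hp0.ne'))
          (by exact_mod_cast hu0.ne')
      have hkey : ((w : ℤ) * N1) * e = (p : ℤ) * t := by
        apply mul_left_cancel₀ hne
        linear_combination ht
      have hpz : Prime (p : ℤ) := Nat.prime_iff_prime_int.mp hp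
      rcases (hpz.dvd_mul.mp ⟨t, hkey⟩) with h | h
      · exfalso
        apply hpMN
        have h' : p ∣ w * N1 := by exact_mod_cast h
        exact h'.trans ⟨u, by rw [hw]; ring⟩
      · exact h
    · rintro ⟨t, ht⟩
      have h1 : (c : ℤ) * e = ((c * p : ℕ) : ℤ) * t := by push_cast; rw [ht]; ring
      rw [h1]
      exact (Int.natCast_dvd_natCast.2 hxcp).mul_right t
  have hkeyEq := key_identity d x y p c m st hp hd hx hy hpx hxcp hdvd
  have hdx : d / x = y := by rw [hd, Nat.mul_div_cancel_left y hx]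
  have hxtp : (x / p) * p = x := Nat.div_mul_cancel hpx
  have hxt0 : 0 < x / p := by
    rcases Nat.eq_zero_or_pos (x / p) with h | h
    · rw [h, zero_mul] at hxtp; omega
    · exact h
  have hdxt : d / (x / p) = y * p := by
    have h1 : d = (x / p) * (y * p) := by
      rw [hd]
      nth_rewrite 1 [← hxtp]
      ring
    rw [h1, Nat.mul_div_cancel_left _ hxt0]
  constructor
  · apply Submodule.sum_mem
    intro j _
    apply Submodule.subset_span
    left
    exact ⟨m, (st + j * c) % x, by rw [hdx]; exact hm, Nat.mod_lt _ hx, by rw [hdx]⟩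
  · rw [hkeyEq]
    apply Submodule.sum_mem
    intro l hl
    apply Submodule.subset_span
    refine ⟨l * y + m, st, ?_, hst, by rw [hdxt]⟩
    rw [hdxt]
    calc l * y + m < l * y + y := by omega
      _ = (l + 1) * y := by ring
      _ ≤ p * y := Nat.mul_le_mul_right y (Finset.mem_range.1 hl)
      _ = y * p := Nat.mul_comm p y
end
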